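/- Let t ∈ (−∞, α₀) be such that ∫_t^{α₀} G(t₂) dt₂ + 1/(α²·R(α₀)) ≠ R(t)·G(t)². Then χ(t)·ζ″(t) − χ″(t) ≠ 0 and the second equation of the ODE system of Section 5.3 holds at t: (χ(t) + χ′(t)²/(χ(t)·ζ″(t) − χ″(t)))·e^{ζ(t)} = (1/(α·R(α₀)) + C_R)·R(t). -/

import Mathlib

open MeasureTheory

/-- In the setting of Section 5.3 (with `G`, `ζ`, `χ` as defined there), let
`t < α₀` be such that `∫_t^{α₀} G(t₂) dt₂ + 1/(α²·R(α₀)) ≠ R(t)·G(t)²`.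
Then `χ(t)·ζ″(t) − χ″(t) ≠ 0` and the second ODE of Section 5.3 holds at `t`:
`(χ(t) + χ′(t)²/(χ(t)·ζ″(t) − χ″(t)))·e^{ζ(t)} = (1/(α·R(α₀)) + C_R)·R(t)`. -/
theorem stmt_5 (α α₀ : ℝ) (hα : 0 < α) (R : ℝ → ℝ)
    (hRpos : ∀ s ≤ α₀, 0 < R s)
    (hRsmooth : ContDiffOn ℝ (⊤ : ℕ∞) R (Set.Iic α₀))
    (hRint : IntegrableOn (fun s => 1 / R s) (Set.Iic α₀))
    (G ζ χ : ℝ → ℝ)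
    (hG : ∀ s, G s = 1 / (α * R α₀) + ∫ u in s..α₀, 1 / R u)
    (hζ : ∀ s, ζ s =
      Real.log (1 / (α * R α₀) + ∫ u in Set.Iic α₀, 1 / R u) - Real.log (G s))
    (hχ : ∀ s, χ s = ((∫ u in s..α₀, G u) + 1 / (α ^ 2 * R α₀)) / G s)
    (t : ℝ) (ht : t < α₀)
    (hne : (∫ u in t..α₀, G u) + 1 / (α ^ 2 * R α₀) ≠ R t * (G t) ^ 2) :
    χ t * deriv (deriv ζ) t - deriv (deriv χ) t ≠ 0 ∧
    (χ t + (deriv χ t) ^ 2 / (χ t * deriv (deriv ζ) t - deriv (deriv χ) t)) *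
        Real.exp (ζ t) =
      (1 / (α * R α₀) + ∫ u in Set.Iic α₀, 1 / R u) * R t := by
  set K := 1 / (α * R α₀) + ∫ u in Set.Iic α₀, 1 / R u with hKdef
  set H : ℝ → ℝ := fun s => (∫ u in s..α₀, G u) + 1 / (α ^ 2 * R α₀) with hHdef
  have hχ' : ∀ s, χ s = H s / G s := fun s => hχ s
  have hne' : H t ≠ R t * G t ^ 2 := hne
  have hRα₀ : 0 < R α₀ := hRpos α₀ le_rfl
  have hc₁ : 0 < 1 / (α * R α₀) := by positivity
  have hfnonneg : ∀ u ≤ α₀, 0 ≤ 1 / R u := fun u hu => le_of_lt (by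
    have := hRpos u hu; positivity)
  have hRcont : ∀ s < α₀, ContinuousAt R s := fun s hs =>
    (hRsmooth.contDiffAt (Iic_mem_nhds hs)).continuousAt
  have hfcont : ContinuousOn (fun u => 1 / R u) (Set.Iio α₀) := fun s hs =>
    (ContinuousAt.div continuousAt_const (hRcont s hs)
      (hRpos s hs.le).ne').continuousWithinAt
  have hfint2 : ∀ a b, a ≤ α₀ → b ≤ α₀ →
      IntervalIntegrable (fun u => 1 / R u) volume a b := by
    intro a b ha hb
    rw [intervalIntegrable_iff]
    exact hRint.mono_set fun x hx => le_trans hx.2 (sup_le ha hb)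
  -- positivity of G
  have Gpos : ∀ s ≤ α₀, 0 < G s := by
    intro s hs
    rw [hG s]
    have h0 : 0 ≤ ∫ u in s..α₀, 1 / R u :=
      intervalIntegral.integral_nonneg hs fun u hu => hfnonneg u hu.2
    linarith
  -- derivative of G
  have hGderiv : ∀ s ∈ Set.Iio α₀, HasDerivAt G (-(1 / R s)) s := by
    intro s hs
    have h1 : HasDerivAt (fun u => ∫ x in u..α₀, 1 / R x) (-(1 / R s)) s :=
      intervalIntegral.integral_hasDerivAt_left (hfint2 s α₀ hs.le le_rfl)
        (hfcont.stronglyMeasurableAtFilter isOpen_Iio s hs)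
        (hfcont.continuousAt (Iio_mem_nhds hs))
    exact (h1.const_add (1 / (α * R α₀))).congr_of_eventuallyEq
      (Filter.Eventually.of_forall hG)
  have GcontOn : ContinuousOn G (Set.Iio α₀) := fun s hs =>
    ((hGderiv s hs).continuousAt).continuousWithinAt
  -- G is antitone on Iic α₀, hence interval integrable
  have GAnti : AntitoneOn G (Set.Iic α₀) := by
    intro u hu v hv huv
    rw [hG u, hG v]
    have h1 := intervalIntegral.integral_add_adjacent_intervals
      (hfint2 u v hu hv) (hfint2 v α₀ hv le_rfl)
    have h3 : 0 ≤ ∫ x in u..v, 1 / R x :=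
      intervalIntegral.integral_nonneg huv fun x hx => hfnonneg x (le_trans hx.2 hv)
    linarith
  have hGint : ∀ s ≤ α₀, IntervalIntegrable G volume s α₀ := by
    intro s hs
    exact (GAnti.mono (by rw [Set.uIcc_of_le hs]; exact Set.Icc_subset_Iic_self)).intervalIntegrable
  -- derivative of H
  have hHderiv : ∀ s ∈ Set.Iio α₀, HasDerivAt H (-(G s)) s := by
    intro s hs
    have h1 : HasDerivAt (fun u => ∫ x in u..α₀, G x) (-(G s)) s :=
      intervalIntegral.integral_hasDerivAt_left (hGint s hs.le)
        (GcontOn.stronglyMeasurableAtFilter isOpen_Iio s hs)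
        (GcontOn.continuousAt (Iio_mem_nhds hs))
    exact h1.add_const _
  -- K positive
  have hKpos : 0 < K := by
    rw [hKdef]
    have h0 : 0 ≤ ∫ u in Set.Iic α₀, 1 / R u :=
      setIntegral_nonneg measurableSet_Iic fun u hu => hfnonneg u hu
    linarith
  -- local nonzero facts at t
  have hr : R t ≠ 0 := (hRpos t ht.le).ne'
  have hg : G t ≠ 0 := (Gpos t ht.le).ne'
  have hRdt : HasDerivAt R (deriv R t) t :=
    ((hRsmooth.contDiffAt (Iic_mem_nhds ht)).differentiableAt (by simp)).hasDerivAt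
  have hGt : HasDerivAt G (-(1 / R t)) t := hGderiv t ht
  have hHt : HasDerivAt H (-(G t)) t := hHderiv t ht
  -- first derivative of ζ
  have hζ1 : ∀ s ∈ Set.Iio α₀, HasDerivAt ζ (1 / (R s * G s)) s := by
    intro s hs
    have hrs : R s ≠ 0 := (hRpos s hs.le).ne'
    have hgs : G s ≠ 0 := (Gpos s hs.le).ne'
    have h1 : HasDerivAt (fun u => Real.log K - Real.log (G u)) (1 / (R s * G s)) s := by
      have h2 := ((hGderiv s hs).log hgs).const_sub (Real.log K)
      refine h2.congr_deriv ?_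
      rw [neg_div, neg_neg, div_div]
    exact h1.congr_of_eventuallyEq (Filter.Eventually.of_forall hζ)
  have hζ2eq : deriv (deriv ζ) t = deriv (fun s => 1 / (R s * G s)) t :=
    Filter.EventuallyEq.deriv_eq
      (Filter.eventuallyEq_of_mem (Iio_mem_nhds ht) fun s hs => (hζ1 s hs).deriv)
  have hζ2 : deriv (deriv ζ) t = (1 - deriv R t * G t) / (R t * G t) ^ 2 := by
    rw [hζ2eq]
    have hrg : R t * G t ≠ 0 := mul_ne_zero hr hg
    rw [HasDerivAt.deriv (f := fun s => 1 / (R s * G s)) ((hasDerivAt_const t (1 : ℝ)).div (hRdt.mul hGt) hrg)]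
    field_simp
    ring
  -- first derivative of χ
  have hχ1 : ∀ s ∈ Set.Iio α₀, HasDerivAt χ
      ((-(G s) * G s - H s * -(1 / R s)) / G s ^ 2) s := by
    intro s hs
    exact ((hHderiv s hs).div (hGderiv s hs) (Gpos s hs.le).ne').congr_of_eventuallyEq
      (Filter.Eventually.of_forall hχ')
  have hχ1t : deriv χ t = (-(G t) * G t - H t * -(1 / R t)) / G t ^ 2 := (hχ1 t ht).deriv
  have hχ2eq : deriv (deriv χ) t =
      deriv (fun s => (-(G s) * G s - H s * -(1 / R s)) / G s ^ 2) t :=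
    Filter.EventuallyEq.deriv_eq
      (Filter.eventuallyEq_of_mem (Iio_mem_nhds ht) fun s hs => (hχ1 s hs).deriv)
  have hχ2 : deriv (deriv χ) t =
      (-(R t) * G t ^ 2 - H t * deriv R t * G t + 2 * H t) / (R t ^ 2 * G t ^ 3) := by
    rw [hχ2eq]
    have hinv : HasDerivAt (fun s => 1 / R s) ((0 * R t - 1 * deriv R t) / R t ^ 2) t :=
      (hasDerivAt_const t (1 : ℝ)).div hRdt hr
    have hN : HasDerivAt (fun s => -(G s) * G s - H s * -(1 / R s))
        (-(-(1 / R t)) * G t + -(G t) * -(1 / R t) -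
          (-(G t) * -(1 / R t) + H t * -((0 * R t - 1 * deriv R t) / R t ^ 2))) t :=
      ((hGt.neg.mul hGt)).sub (hHt.mul hinv.neg)
    have hD : HasDerivAt (fun s => G s ^ 2)
        ((2 : ℕ) * G t ^ (2 - 1) * -(1 / R t)) t := hGt.pow 2
    have hg2 : G t ^ 2 ≠ 0 := pow_ne_zero _ hg
    rw [HasDerivAt.deriv (f := fun s => (-(G s) * G s - H s * -(1 / R s)) / G s ^ 2) (hN.div hD hg2)]
    field_simp
    ring
  -- value of exp (ζ t)
  have hexp : Real.exp (ζ t) = K / G t := by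
    rw [hζ t, Real.exp_sub, Real.exp_log hKpos, Real.exp_log (Gpos t ht.le)]
  -- key expression
  have hsub : R t * G t ^ 2 - H t ≠ 0 := sub_ne_zero.mpr (Ne.symm hne')
  have hE : χ t * deriv (deriv ζ) t - deriv (deriv χ) t =
      (R t * G t ^ 2 - H t) / (R t ^ 2 * G t ^ 3) := by
    rw [hχ' t, hζ2, hχ2]
    field_simp
    ring
  constructor
  · rw [hE]
    exact div_ne_zero hsub (by positivity)
  · rw [hE, hχ' t, hχ1t, hexp]
    have hsub' : -H t + G t ^ 2 * R t ≠ 0 := by contrapose! hsub; linarith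
    field_simp
    have e : (-H t + G t ^ 2 * R t)⁻¹ * (-H t + G t ^ 2 * R t) = 1 := inv_mul_cancel₀ hsub'
    linear_combination (-H t + G t ^ 2 * R t) * e
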